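/- There exists an absolute constant C > 0 with the following property. Let q be a probability distribution on [n], let ε ∈ (0,1), let m > 0 be a real number, and let X_1,…,X_n be independent random variables with X_i distributed as Poi(m·q_i). Define Z = Σ_{i=1}^n ((X_i − m/n)² − X_i). Then: (i) if q = U_n, then Pr[Z ≥ 4m/√n] ≤ 1/3; and (ii) if ‖q − U_n‖_2 ≥ ε/√n and m ≥ C·√n/ε², then Pr[Z ≤ 4m/√n] ≤ 1/3. -/

import Mathlib

open Finset ProbabilityTheory MeasureTheory
open scoped NNReal ENNReal

/-- The probability mass that a function on `Fin n` assigns to the (0-indexed)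
interval `[a, b)`. -/
noncomputable def intervalMass {n : ℕ} (q : Fin n → ℝ) (a b : ℕ) : ℝ :=
  ∑ j ∈ Finset.univ.filter (fun j : Fin n => a ≤ (j : ℕ) ∧ (j : ℕ) < b), q j

/-- `q` is a probability distribution on `[n]` (identified with `Fin n`). -/
noncomputable def IsDist {n : ℕ} (q : Fin n → ℝ) : Prop := (∀ i, 0 ≤ q i) ∧ ∑ i, q i = 1

/-- The `A_k` distance between `p` and `q` on `Fin n`: the supremum, over all partitions of
`Fin n` into `k` consecutive intervals (described by their monotone sequence of boundary
points), of the sum of the discrepancies `|p(I) - q(I)|` over the intervals. -/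
noncomputable def AkDist (n k : ℕ) (p q : Fin n → ℝ) : ℝ :=
  sSup { x : ℝ | ∃ b : Fin (k + 1) → ℕ, Monotone b ∧ b 0 = 0 ∧ b (Fin.last k) = n ∧
    x = ∑ i : Fin k,
      |intervalMass p (b i.castSucc) (b i.succ) - intervalMass q (b i.castSucc) (b i.succ)| }

/-- The `L1` distance between two functions on `Fin n`. -/
noncomputable def L1Dist {n : ℕ} (p q : Fin n → ℝ) : ℝ := ∑ i, |p i - q i|

/-- The `L2` distance between two functions on `Fin n`. -/
noncomputable def L2Dist {n : ℕ} (p q : Fin n → ℝ) : ℝ := Real.sqrt (∑ i, (p i - q i) ^ 2)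

/-- The uniform distribution on `Fin n`. -/
noncomputable def unif (n : ℕ) : Fin n → ℝ := fun _ => 1 / n

/-- The probability that the `m`-fold product measure `q^{⊗m}` assigns to a set
`A ⊆ [n]^m` of sample sequences. -/
noncomputable def prodProb {n m : ℕ} (q : Fin n → ℝ) (A : Finset (Fin m → Fin n)) : ℝ :=
  ∑ x ∈ A, ∏ j, q (x j)

/-- The reduced distribution of `q` w.r.t. the partition of `Fin n` into `ℓ` consecutive
intervals of equal length `n / ℓ` (assuming `ℓ ∣ n`). -/
noncomputable def reducedDist {n : ℕ} (q : Fin n → ℝ) (ℓ : ℕ) : Fin ℓ → ℝ :=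
  fun i => intervalMass q ((i : ℕ) * (n / ℓ)) (((i : ℕ) + 1) * (n / ℓ))

/-- `p` is a `t`-piecewise degree-`d` function on `Fin n`: there is a partition of `Fin n`
into `t` consecutive intervals on each of which `p` agrees with a real polynomial of degree
at most `d`. -/
noncomputable def IsPiecewisePoly {n : ℕ} (t d : ℕ) (p : Fin n → ℝ) : Prop :=
  ∃ b : Fin (t + 1) → ℕ, Monotone b ∧ b 0 = 0 ∧ b (Fin.last t) = n ∧
    ∀ i : Fin t, ∃ P : Polynomial ℝ, P.degree ≤ (d : ℕ) ∧
      ∀ x : Fin n, b i.castSucc ≤ (x : ℕ) → (x : ℕ) < b i.succ → p x = P.eval ((x : ℕ) : ℝ)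

/-- `q` is `k`-flat: there is a partition of `Fin n` into `k` consecutive intervals
on each of which `q` is constant. -/
noncomputable def IsKFlat {n : ℕ} (k : ℕ) (q : Fin n → ℝ) : Prop :=
  ∃ b : Fin (k + 1) → ℕ, Monotone b ∧ b 0 = 0 ∧ b (Fin.last k) = n ∧
    ∀ i : Fin k, ∃ c : ℝ, ∀ x : Fin n, b i.castSucc ≤ (x : ℕ) → (x : ℕ) < b i.succ → q x = c

/-- The term `Discr(I)² / width(I)^{1/8}` for the interval `I = [a, b)` in `Fin n`, where
the discrepancy is `Discr(I) = |q(I) - U_n(I)|` and the width is `|I|/n` (relative to the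
uniform distribution `U_n`). -/
noncomputable def ssTerm {n : ℕ} (q : Fin n → ℝ) (a b : ℕ) : ℝ :=
  |intervalMass q a b - ((b - a : ℕ) : ℝ) / n| ^ 2 / (((b - a : ℕ) : ℝ) / n) ^ ((1 : ℝ) / 8)

/-- The squared scale-sensitive-`L2` distance between `q` and the uniform distribution
on `Fin n`, at scale `1/k`: the supremum, over all partitions of `Fin n` into consecutive
nonempty intervals each of width at most `1/k`, of `∑ Discr(I)² / width(I)^{1/8}`. -/
noncomputable def ssDistSq (n k : ℕ) (q : Fin n → ℝ) : ℝ :=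
  sSup { x : ℝ | ∃ r : ℕ, ∃ b : Fin (r + 1) → ℕ, StrictMono b ∧ b 0 = 0 ∧ b (Fin.last r) = n ∧
    (∀ i : Fin r, ((b i.succ - b i.castSucc : ℕ) : ℝ) / n ≤ 1 / k) ∧
    x = ∑ i : Fin r, ssTerm q (b i.castSucc) (b i.succ) }
namespace ChiSqAux

lemma descCast2 (n : ℕ) : ((n.descFactorial 2 : ℕ) : ℝ) = (n:ℝ)^2 - n := by
  match n with
  | 0 => simp
  | (m+1) =>
    rw [Nat.succ_descFactorial_succ, Nat.descFactorial_one]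
    push_cast; ring

lemma descCast3 (n : ℕ) : ((n.descFactorial 3 : ℕ) : ℝ) = (n:ℝ)^3 - 3*(n:ℝ)^2 + 2*n := by
  match n with
  | 0 => simp
  | 1 => norm_num [Nat.descFactorial]
  | (m+2) =>
    rw [Nat.succ_descFactorial_succ, Nat.succ_descFactorial_succ, Nat.descFactorial_one]
    push_cast; ring

lemma descCast4 (n : ℕ) :
    ((n.descFactorial 4 : ℕ) : ℝ) = (n:ℝ)^4 - 6*(n:ℝ)^3 + 11*(n:ℝ)^2 - 6*n := by
  match n with
  | 0 => simp
  | 1 => norm_num [Nat.descFactorial]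
  | 2 => norm_num [Nat.descFactorial]
  | (m+3) =>
    rw [Nat.succ_descFactorial_succ, Nat.succ_descFactorial_succ,
      Nat.succ_descFactorial_succ, Nat.descFactorial_one]
    push_cast; ring

lemma poisson_desc (r : ℝ≥0) (k : ℕ) :
    Integrable (fun n => (n.descFactorial k : ℝ)) (poissonMeasure r) ∧
    ∫ n, (n.descFactorial k : ℝ) ∂(poissonMeasure r) = (r:ℝ)^k := by
  set f : ℕ → ℝ := fun n => poissonPMFReal r n * (n.descFactorial k : ℝ) with hf
  have hfnn : ∀ n, 0 ≤ f n := fun n =>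
    mul_nonneg poissonPMFReal_nonneg (Nat.cast_nonneg _)
  have key : ∀ j, f (j + k) = (r:ℝ)^k * poissonPMFReal r j := by
    intro j
    have h1 : (Nat.factorial j) * (j + k).descFactorial k = (Nat.factorial (j + k)) := by
      have := Nat.factorial_mul_descFactorial (Nat.le_add_left k j)
      simpa using this
    have hc : ((Nat.factorial j) : ℝ) * ((j + k).descFactorial k : ℝ) = ((Nat.factorial (j + k)) : ℝ) := by
      exact_mod_cast congrArg (Nat.cast : ℕ → ℝ) h1
    simp only [hf, poissonPMFReal]
    rw [pow_add]
    have h2 : ((Nat.factorial (j + k)) : ℝ) ≠ 0 := Nat.cast_ne_zero.mpr (Nat.factorial_ne_zero _)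
    have h3 : ((Nat.factorial j) : ℝ) ≠ 0 := Nat.cast_ne_zero.mpr (Nat.factorial_ne_zero _)
    field_simp
    rw [← hc]
    ring
  have hzero : ∀ n < k, f n = 0 := by
    intro n hn
    simp [hf, Nat.descFactorial_eq_zero_iff_lt.mpr hn]
  have hsum0 : Summable (fun j => f (j + k)) := by
    apply Summable.congr (((poissonPMFRealSum r).summable.mul_left ((r:ℝ)^k)))
    intro j; exact (key j).symm
  have hsum : Summable f := (summable_nat_add_iff k).mp hsum0
  have htail : ∑' j, f (j + k) = (r:ℝ)^k := by
    rw [tsum_congr key, tsum_mul_left, show ∑' n, poissonPMFReal r n = 1 from (poissonPMFRealSum r).tsum_eq, mul_one]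
  have htsum : ∑' n, f n = (r:ℝ)^k := by
    have h := (Summable.sum_add_tsum_nat_add k hsum).symm
    have hz : ∑ i ∈ range k, f i = 0 :=
      Finset.sum_eq_zero (fun i hi => hzero i (Finset.mem_range.mp hi))
    rw [hz, zero_add, htail] at h
    exact h
  have hpmf : ∀ n, poissonPMF r n = ENNReal.ofReal (poissonPMFReal r n) := fun n => rfl
  have hmeas : ∀ n : ℕ, (poissonMeasure r) {n} = ENNReal.ofReal (poissonPMFReal r n) := by
    intro n
    rw [poissonMeasure_singleton]; rfl
  have hint : Integrable (fun n => (n.descFactorial k : ℝ)) (poissonMeasure r) := by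
    refine ⟨(measurable_of_countable _).stronglyMeasurable.aestronglyMeasurable, ?_⟩
    unfold HasFiniteIntegral
    rw [lintegral_countable']
    have : ∀ n : ℕ, ‖(n.descFactorial k : ℝ)‖ₑ * (poissonMeasure r) {n}
        = ENNReal.ofReal (f n) := by
      intro n
      rw [hmeas n, hf, Real.enorm_eq_ofReal (Nat.cast_nonneg _),
        ← ENNReal.ofReal_mul (Nat.cast_nonneg _)]
      simp [mul_comm]
    rw [tsum_congr this, ← ENNReal.ofReal_tsum_of_nonneg hfnn hsum]
    exact ENNReal.ofReal_lt_top
  refine ⟨hint, ?_⟩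
  rw [integral_poissonMeasure' hint]
  rw [← htsum]
  apply tsum_congr
  intro n
  rw [smul_eq_mul, hf]; rfl

lemma poisson_g (r : ℝ≥0) (a : ℝ) :
    MemLp (fun x : ℕ => ((x:ℝ) - a)^2 - x) 2 (poissonMeasure r) ∧
    ∫ x : ℕ, (((x:ℝ) - a)^2 - x) ∂(poissonMeasure r) = ((r:ℝ) - a)^2 ∧
    variance (fun x : ℕ => ((x:ℝ) - a)^2 - x) (poissonMeasure r)
      = 2*(r:ℝ)^2 + 4*(r:ℝ)*((r:ℝ)-a)^2 := by
  have h0 := poisson_desc r 0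
  have h1 := poisson_desc r 1
  have h2 := poisson_desc r 2
  have h3 := poisson_desc r 3
  have h4 := poisson_desc r 4
  have hg_eq : (fun x : ℕ => ((x:ℝ) - a)^2 - x)
      = fun n : ℕ => ((n.descFactorial 2 : ℝ) - (2*a) * (n.descFactorial 1 : ℝ))
        + a^2 * (n.descFactorial 0 : ℝ) := by
    funext n
    simp only [descCast2, Nat.descFactorial_one, Nat.descFactorial_zero, Nat.cast_one]
    ring
  have ia1 : Integrable (fun n : ℕ => (2*a) * (n.descFactorial 1 : ℝ)) (poissonMeasure r) :=
    h1.1.const_mul _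
  have ia0 : Integrable (fun n : ℕ => a^2 * (n.descFactorial 0 : ℝ)) (poissonMeasure r) :=
    h0.1.const_mul _
  have ia21 : Integrable (fun n : ℕ => (n.descFactorial 2 : ℝ)
      - (2*a) * (n.descFactorial 1 : ℝ)) (poissonMeasure r) := h2.1.sub ia1
  have hgint : Integrable (fun x : ℕ => ((x:ℝ) - a)^2 - x) (poissonMeasure r) := by
    rw [hg_eq]; exact ia21.add ia0
  have hgval : ∫ x : ℕ, (((x:ℝ) - a)^2 - x) ∂(poissonMeasure r) = ((r:ℝ) - a)^2 := by
    rw [hg_eq, integral_add ia21 ia0, integral_sub h2.1 ia1, integral_const_mul,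
      integral_const_mul, h0.2, h1.2, h2.2]
    ring
  have hg2_eq : (fun x : ℕ => (((x:ℝ) - a)^2 - x)^2)
      = fun n : ℕ => (((n.descFactorial 4 : ℝ) + (4-4*a) * (n.descFactorial 3 : ℝ))
        + ((6*a^2-8*a+2) * (n.descFactorial 2 : ℝ) + (4*a^2-4*a^3) * (n.descFactorial 1 : ℝ)))
        + a^4 * (n.descFactorial 0 : ℝ) := by
    funext n
    simp only [descCast2, descCast3, descCast4, Nat.descFactorial_one,
      Nat.descFactorial_zero, Nat.cast_one]
    ring
  have ib3 : Integrable (fun n : ℕ => (4-4*a) * (n.descFactorial 3 : ℝ)) (poissonMeasure r) :=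
    h3.1.const_mul _
  have ib2 : Integrable (fun n : ℕ => (6*a^2-8*a+2) * (n.descFactorial 2 : ℝ)) (poissonMeasure r) :=
    h2.1.const_mul _
  have ib1 : Integrable (fun n : ℕ => (4*a^2-4*a^3) * (n.descFactorial 1 : ℝ)) (poissonMeasure r) :=
    h1.1.const_mul _
  have ib0 : Integrable (fun n : ℕ => a^4 * (n.descFactorial 0 : ℝ)) (poissonMeasure r) :=
    h0.1.const_mul _
  have ib43 : Integrable (fun n : ℕ => (n.descFactorial 4 : ℝ)
      + (4-4*a) * (n.descFactorial 3 : ℝ)) (poissonMeasure r) := h4.1.add ib3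
  have ib21 : Integrable (fun n : ℕ => (6*a^2-8*a+2) * (n.descFactorial 2 : ℝ)
      + (4*a^2-4*a^3) * (n.descFactorial 1 : ℝ)) (poissonMeasure r) := ib2.add ib1
  have ib4321 : Integrable (fun n : ℕ => ((n.descFactorial 4 : ℝ)
      + (4-4*a) * (n.descFactorial 3 : ℝ)) + ((6*a^2-8*a+2) * (n.descFactorial 2 : ℝ)
      + (4*a^2-4*a^3) * (n.descFactorial 1 : ℝ))) (poissonMeasure r) := ib43.add ib21
  have hg2int : Integrable (fun x : ℕ => (((x:ℝ) - a)^2 - x)^2) (poissonMeasure r) := by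
    rw [hg2_eq]
    exact ib4321.add ib0
  have hg2val : ∫ x : ℕ, (((x:ℝ) - a)^2 - x)^2 ∂(poissonMeasure r)
      = (r:ℝ)^4 + (4-4*a)*(r:ℝ)^3 + (6*a^2-8*a+2)*(r:ℝ)^2 + (4*a^2-4*a^3)*(r:ℝ) + a^4 := by
    rw [hg2_eq, integral_add ib4321 ib0, integral_add ib43 ib21, integral_add h4.1 ib3,
      integral_add ib2 ib1, integral_const_mul, integral_const_mul, integral_const_mul,
      integral_const_mul, h0.2, h1.2, h2.2, h3.2, h4.2]
    ring
  have hmem : MemLp (fun x : ℕ => ((x:ℝ) - a)^2 - x) 2 (poissonMeasure r) := by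
    rw [memLp_two_iff_integrable_sq
      (measurable_of_countable _).stronglyMeasurable.aestronglyMeasurable]
    exact hg2int
  refine ⟨hmem, hgval, ?_⟩
  rw [variance_eq_sub hmem]
  have : (fun x : ℕ => ((x:ℝ) - a)^2 - x) ^ 2 = fun x : ℕ => (((x:ℝ) - a)^2 - x)^2 := rfl
  rw [this, hg2val, hgval]
  ring

set_option maxHeartbeats 1000000 in
lemma numeric (t v m ε : ℝ) (ht : 1 ≤ t) (hε0 : 0 < ε) (hε1 : ε ≤ 1)
    (hvε : ε / t ≤ v) (hm : 100 * t / ε^2 ≤ m) :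
    0 < m ∧ 4*m/t ≤ (1/25)*(m^2*v^2) ∧ 0 < m^2*v^2 - 4*m/t ∧
    (2*m^2*(v^2 + 1/t^2) + 4*m^3*(v^3 + v^2/t^2)) / (m^2*v^2 - 4*m/t)^2 ≤ 1/3 := by
  have ht0 : (0:ℝ) < t := lt_of_lt_of_le one_pos ht
  have hv0 : 0 < v := lt_of_lt_of_le (div_pos hε0 ht0) hvε
  have hm0 : 0 < m := lt_of_lt_of_le (by positivity) hm
  have hεt : 0 ≤ ε / t := (div_pos hε0 ht0).le
  have h1' : (100 * t / ε^2) * (ε / t) ≤ m * v :=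
    mul_le_mul hm hvε hεt (le_trans (by positivity) hm)
  have heq1 : (100 * t / ε^2) * (ε / t) = 100 / ε := by
    field_simp
  have hmv : 100 / ε ≤ m * v := heq1 ▸ h1'
  have h1 : 100 ≤ m * v := le_trans (by rw [le_div_iff₀ hε0]; nlinarith) hmv
  have h2' : (100 / ε) * (ε / t) ≤ (m * v) * v :=
    mul_le_mul hmv hvε hεt (by positivity)
  have heq2 : (100 / ε) * (ε / t) = 100 / t := by field_simp
  have hmv2 : 100 / t ≤ m * v^2 := by nlinarith [heq2 ▸ h2']
  have h2 : 100 ≤ m * v^2 * t := by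
    rw [div_le_iff₀ ht0] at hmv2; linarith
  have h3' : (100 * t / ε^2) * (100 / t) ≤ m * (m * v^2) :=
    mul_le_mul hm hmv2 (by positivity) hm0.le
  have heq3 : (100 * t / ε^2) * (100 / t) = 10000 / ε^2 := by field_simp; ring
  have h3 : 10000 ≤ m^2 * v^2 := by
    have : (10000:ℝ) ≤ 10000 / ε^2 := by
      rw [le_div_iff₀ (by positivity)]; nlinarith
    nlinarith [heq3 ▸ h3']
  have hc : 4*m/t ≤ (1/25)*(m^2*v^2) := by
    rw [div_le_iff₀ ht0]
    nlinarith [mul_le_mul_of_nonneg_left h2 (mul_nonneg hm0.le ht0.le)]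
  have hmv2pos : (0:ℝ) < m^2*v^2 := by positivity
  have hD : (24/25)*(m^2*v^2) ≤ m^2*v^2 - 4*m/t := by linarith
  have hD0 : 0 < m^2*v^2 - 4*m/t := by linarith
  refine ⟨hm0, hc, hD0, ?_⟩
  rw [div_le_iff₀ (by positivity)]
  have hDsq : ((24/25)*(m^2*v^2))^2 ≤ (m^2*v^2 - 4*m/t)^2 := by
    apply sq_le_sq'
    · linarith
    · linarith
  have ht2 : (0:ℝ) < t^2 := by positivity
  have hsqB : (10000:ℝ) ≤ (m*v^2*t)^2 := by nlinarith
  have h2' : (100:ℝ) ≤ m*v^2*t^2 := by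
    nlinarith [mul_nonneg (mul_nonneg (mul_nonneg hm0.le (sq_nonneg v)) ht0.le)
      (sub_nonneg.mpr ht)]
  have hX : (0:ℝ) ≤ (m^2*v^2)^2*t^2 := by positivity
  have pA : 2*m^2*v^2*t^2 ≤ (2/10000)*((m^2*v^2)^2*t^2) := by
    nlinarith [mul_le_mul_of_nonneg_left h3 (mul_nonneg hmv2pos.le ht2.le)]
  have pB : 2*m^2 ≤ (2/10000)*((m^2*v^2)^2*t^2) := by
    nlinarith [mul_le_mul_of_nonneg_left hsqB (sq_nonneg m)]
  have pC : 4*m^3*v^3*t^2 ≤ (4/100)*((m^2*v^2)^2*t^2) := by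
    nlinarith [mul_le_mul_of_nonneg_left h1
      (mul_nonneg (mul_nonneg (pow_nonneg hm0.le 3) (pow_nonneg hv0.le 3)) ht2.le)]
  have pD : 4*m^3*v^2 ≤ (4/100)*((m^2*v^2)^2*t^2) := by
    nlinarith [mul_le_mul_of_nonneg_left h2'
      (mul_nonneg (pow_nonneg hm0.le 3) (sq_nonneg v))]
  have keymul : (2*m^2*(v^2 + 1/t^2) + 4*m^3*(v^3 + v^2/t^2)) * t^2
      ≤ ((1/3)*((24/25)*(m^2*v^2))^2) * t^2 := by
    have expand : (2*m^2*(v^2 + 1/t^2) + 4*m^3*(v^3 + v^2/t^2)) * t^2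
        = 2*m^2*v^2*t^2 + 2*m^2 + (4*m^3*v^3*t^2 + 4*m^3*v^2) := by
      field_simp
    rw [expand]
    have : ((1/3)*((24/25)*(m^2*v^2))^2) * t^2 = (192/625)*((m^2*v^2)^2*t^2) := by ring
    rw [this]
    linarith
  have key : 2*m^2*(v^2 + 1/t^2) + 4*m^3*(v^3 + v^2/t^2)
      ≤ (1/3)*((24/25)*(m^2*v^2))^2 :=
    le_of_mul_le_mul_right keymul ht2
  nlinarith [key, hDsq]

lemma variance_map' {Ω : Type} [MeasurableSpace Ω] (μ : Measure Ω) [IsProbabilityMeasure μ]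
    (f : Ω → ℕ) (hf : Measurable f) (g : ℕ → ℝ)
    (hP : IsProbabilityMeasure (Measure.map f μ))
    (hg : MemLp g 2 (Measure.map f μ)) :
    variance (fun ω => g (f ω)) μ = variance g (Measure.map f μ) := by
  have hgsm : AEStronglyMeasurable g (Measure.map f μ) :=
    (measurable_of_countable g).stronglyMeasurable.aestronglyMeasurable
  have hg2sm : AEStronglyMeasurable (g ^ 2) (Measure.map f μ) :=
    (measurable_of_countable _).stronglyMeasurable.aestronglyMeasurable
  have h1 : MemLp (fun ω => g (f ω)) 2 μ :=
    (memLp_map_measure_iff hgsm hf.aemeasurable).mp hg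
  rw [variance_eq_sub hg, variance_eq_sub h1,
    integral_map hf.aemeasurable hg2sm, integral_map hf.aemeasurable hgsm]
  rfl


end ChiSqAux

open ChiSqAux

/-- **The Poissonized chi-squared uniformity tester.**
With `X i ~ Poi(m qᵢ)` independent and `Z = ∑ i ((Xᵢ - m/n)² - Xᵢ)`:
(i) if `q = U_n` then `Pr[Z ≥ 4m/√n] ≤ 1/3`; (ii) there is a universal constant `C > 0`
such that if `‖q - U_n‖₂ ≥ ε/√n` and `m ≥ C √n/ε²` then `Pr[Z ≤ 4m/√n] ≤ 1/3`. -/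
theorem chi_squared_uniformity_tester :
    ∃ C : ℝ, 0 < C ∧ ∀ (n : ℕ) (q : Fin n → ℝ) (ε m : ℝ)
      (Ω : Type) [MeasurableSpace Ω] (μ : Measure Ω) [IsProbabilityMeasure μ]
      (X : Fin n → Ω → ℕ),
      1 ≤ n → IsDist q → 0 < ε → ε < 1 → 0 < m →
      (∀ i, Measurable (X i)) →
      iIndepFun X μ →
      (∀ i, μ.map (X i) = poissonMeasure (m * q i).toNNReal) →
      (q = unif n →
        μ {ω | 4 * m / Real.sqrt n ≤ ∑ i, (((X i ω : ℝ) - m / n) ^ 2 - (X i ω : ℝ))} ≤ 1 / 3) ∧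
      (ε / Real.sqrt n ≤ L2Dist q (unif n) → C * Real.sqrt n / ε ^ 2 ≤ m →
        μ {ω | ∑ i, (((X i ω : ℝ) - m / n) ^ 2 - (X i ω : ℝ)) ≤ 4 * m / Real.sqrt n} ≤ 1 / 3) := by
  refine ⟨100, by norm_num, ?_⟩
  intro n q ε m Ω _ μ _ X hn hq hε0 hε1 hm hXmeas hindep hmap
  have hn0 : (0:ℝ) < n := by exact_mod_cast hn
  have ht1 : (1:ℝ) ≤ Real.sqrt n := by
    rw [show (1:ℝ) = Real.sqrt 1 by simp]
    exact Real.sqrt_le_sqrt (by exact_mod_cast hn)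
  have ht0 : (0:ℝ) < Real.sqrt n := lt_of_lt_of_le one_pos ht1
  have htsq : Real.sqrt n ^ 2 = (n:ℝ) := Real.sq_sqrt hn0.le
  set g : ℕ → ℝ := fun x => ((x:ℝ) - m/(n:ℝ))^2 - x with hg_def
  set T : Fin n → Ω → ℝ := fun i ω => g (X i ω) with hT_def
  set r : Fin n → ℝ≥0 := fun i => (m * q i).toNNReal with hr_def
  have hri : ∀ i, ((r i : ℝ)) = m * q i := fun i =>
    Real.coe_toNNReal _ (mul_nonneg hm.le (hq.1 i))
  have hprob : ∀ i, IsProbabilityMeasure (Measure.map (X i) μ) := by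
    intro i; rw [hmap i]; infer_instance
  have hgsm : ∀ i, AEStronglyMeasurable g (Measure.map (X i) μ) := fun i =>
    (measurable_of_countable g).stronglyMeasurable.aestronglyMeasurable
  have hmemT : ∀ i, MemLp (T i) 2 μ := by
    intro i
    have h := (poisson_g (r i) (m/(n:ℝ))).1
    rw [← hmap i] at h
    exact (memLp_map_measure_iff (hgsm i) (hXmeas i).aemeasurable).mp h
  have hZmem : MemLp (∑ i, T i) 2 μ := memLp_finsetSum' univ (fun i _ => hmemT i)
  have hET : ∀ i, μ[T i] = (m * q i - m/(n:ℝ))^2 := by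
    intro i
    have h := (poisson_g (r i) (m/(n:ℝ))).2.1
    rw [← hmap i, integral_map (hXmeas i).aemeasurable (hgsm i), hri i] at h
    exact h
  have hVarT : ∀ i, variance (T i) μ
      = 2*(m * q i)^2 + 4*(m * q i)*(m * q i - m/(n:ℝ))^2 := by
    intro i
    have h := (poisson_g (r i) (m/(n:ℝ))).2.2
    rw [← hmap i] at h
    have h2 := variance_map' μ (X i) (hXmeas i) g (hprob i)
      (by rw [hmap i]; exact (poisson_g (r i) (m/(n:ℝ))).1)
    rw [h2, h, hri i]
  have hEZ : μ[∑ i, T i] = ∑ i, (m * q i - m/(n:ℝ))^2 := by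
    rw [show μ[∑ i, T i] = ∫ ω, ∑ i, T i ω ∂μ by
        congr 1; funext ω; simp [Finset.sum_apply]]
    rw [integral_finset_sum univ (fun i _ => (hmemT i).integrable one_le_two)]
    exact Finset.sum_congr rfl (fun i _ => hET i)
  have hVarZ : variance (∑ i, T i) μ
      = ∑ i, (2*(m * q i)^2 + 4*(m * q i)*(m * q i - m/(n:ℝ))^2) := by
    rw [IndepFun.variance_sum (fun i _ => hmemT i) ?pair]
    · exact Finset.sum_congr rfl (fun i _ => hVarT i)
    case pair =>
      intro i _ j _ hij
      exact (hindep.indepFun hij).comp (measurable_of_countable g) (measurable_of_countable g)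
  constructor
  · -- uniform case
    intro hqu
    have hqi : ∀ i : Fin n, q i = 1/(n:ℝ) := fun i => by rw [hqu]; rfl
    have hEZ0 : μ[∑ i, T i] = 0 := by
      rw [hEZ]
      apply Finset.sum_eq_zero
      intro i _
      rw [hqi i, mul_one_div, sub_self]
      rw [zero_pow two_ne_zero]
    have hVarZval : variance (∑ i, T i) μ = 2*m^2/(n:ℝ) := by
      rw [hVarZ]
      have : ∀ i : Fin n, (2*(m * q i)^2 + 4*(m * q i)*(m * q i - m/(n:ℝ))^2)
          = 2*m^2/(n:ℝ)^2 := by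
        intro i; rw [hqi i, mul_one_div, sub_self]
        rw [zero_pow two_ne_zero, mul_zero, add_zero, div_pow]
        ring
      rw [Finset.sum_congr rfl (fun i _ => this i), Finset.sum_const, card_univ,
        Fintype.card_fin, nsmul_eq_mul]
      field_simp
    have hc0 : 0 < 4 * m / Real.sqrt n := by positivity
    have hcheb := meas_ge_le_variance_div_sq (μ := μ) hZmem hc0
    rw [hEZ0, hVarZval] at hcheb
    refine le_trans (le_trans (measure_mono ?_) hcheb) ?_
    · intro ω hω
      simp only [Set.mem_setOf_eq] at hω ⊢
      have hZω : (∑ i, T i) ω = ∑ i, (((X i ω : ℝ) - m/(n:ℝ))^2 - (X i ω : ℝ)) := by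
        simp [Finset.sum_apply, hT_def, hg_def]
      rw [hZω, sub_zero]
      exact le_trans hω (le_abs_self _)
    · have heq : 2*m^2/(n:ℝ) / (4 * m / Real.sqrt n)^2 = 1/8 := by
        rw [div_pow, htsq]
        rw [div_div_div_cancel_right₀ hn0.ne']
        rw [div_eq_iff (by positivity : ((4*m:ℝ))^2 ≠ 0)]
        ring
      rw [heq]
      calc ENNReal.ofReal (1/8) ≤ ENNReal.ofReal (1/3) :=
            ENNReal.ofReal_le_ofReal (by norm_num)
        _ = 1/3 := by
            rw [ENNReal.ofReal_div_of_pos (by norm_num)]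
            norm_num
  · -- far case
    intro hL2 hmC
    set s : ℝ := ∑ i, (q i - 1/(n:ℝ))^2 with hs_def
    have hs_nn : 0 ≤ s := Finset.sum_nonneg (fun i _ => sq_nonneg _)
    set v : ℝ := Real.sqrt s with hv_def
    have hv_sq : v^2 = s := Real.sq_sqrt hs_nn
    have hvε : ε / Real.sqrt n ≤ v := by
      rw [hv_def, hs_def]
      have : L2Dist q (unif n) = Real.sqrt (∑ i, (q i - 1/(n:ℝ))^2) := by
        simp [L2Dist, unif]
      rw [← this]; exact hL2
    obtain ⟨hm0, hc25, hD0, hfin⟩ :=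
      numeric (Real.sqrt n) v m ε ht1 hε0 hε1.le hvε hmC
    -- sum identities
    have hsumq : ∑ i, q i = 1 := hq.2
    have hQ : ∑ i, (q i)^2 = s + 1/(n:ℝ) := by
      have expand : ∀ i : Fin n, (q i - 1/(n:ℝ))^2
          = (q i)^2 - (2/(n:ℝ)) * q i + 1/(n:ℝ)^2 := by intro i; field_simp; ring
      rw [hs_def, Finset.sum_congr rfl (fun i _ => expand i)]
      rw [Finset.sum_add_distrib, Finset.sum_sub_distrib, ← Finset.mul_sum, hsumq,
        Finset.sum_const, card_univ, Fintype.card_fin, nsmul_eq_mul]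
      field_simp
      ring
    have hdv : ∀ i : Fin n, |q i - 1/(n:ℝ)| ≤ v := by
      intro i
      rw [← Real.sqrt_sq_eq_abs, hv_def]
      exact Real.sqrt_le_sqrt (Finset.single_le_sum
        (fun j (_ : j ∈ univ) => sq_nonneg (q j - 1/(n:ℝ))) (mem_univ i))
    have hP : ∑ i, q i * (q i - 1/(n:ℝ))^2 ≤ v^3 + v^2/(n:ℝ) := by
      have step : ∀ i : Fin n, q i * (q i - 1/(n:ℝ))^2
          ≤ v * (q i - 1/(n:ℝ))^2 + (1/(n:ℝ)) * (q i - 1/(n:ℝ))^2 := by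
        intro i
        have h1 : q i ≤ v + 1/(n:ℝ) := by
          have := hdv i
          have := le_abs_self (q i - 1/(n:ℝ))
          linarith [abs_nonneg (q i - 1/(n:ℝ))]
        nlinarith [sq_nonneg (q i - 1/(n:ℝ))]
      calc ∑ i, q i * (q i - 1/(n:ℝ))^2
          ≤ ∑ i, (v * (q i - 1/(n:ℝ))^2 + (1/(n:ℝ)) * (q i - 1/(n:ℝ))^2) :=
            Finset.sum_le_sum (fun i _ => step i)
        _ = v * s + (1/(n:ℝ)) * s := by
            rw [Finset.sum_add_distrib, ← Finset.mul_sum, ← Finset.mul_sum]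
        _ ≤ v^3 + v^2/(n:ℝ) := by
            rw [← hv_sq]; ring_nf
            exact le_refl _
    have hEZval : μ[∑ i, T i] = m^2 * s := by
      rw [hEZ, hs_def, Finset.mul_sum]
      apply Finset.sum_congr rfl
      intro i _
      ring
    have hVarZle : variance (∑ i, T i) μ
        ≤ 2*m^2*(v^2 + 1/(Real.sqrt n)^2) + 4*m^3*(v^3 + v^2/(Real.sqrt n)^2) := by
      rw [hVarZ, htsq]
      have expand : ∑ i, (2*(m * q i)^2 + 4*(m * q i)*(m * q i - m/(n:ℝ))^2)
          = 2*m^2*(∑ i, (q i)^2) + 4*m^3*(∑ i, q i * (q i - 1/(n:ℝ))^2) := by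
        rw [Finset.mul_sum, Finset.mul_sum, ← Finset.sum_add_distrib]
        apply Finset.sum_congr rfl
        intro i _
        have : m * q i - m/(n:ℝ) = m * (q i - 1/(n:ℝ)) := by field_simp
        rw [this]; ring
      rw [expand, hQ, ← hv_sq]
      have := mul_le_mul_of_nonneg_left hP (by positivity : (0:ℝ) ≤ 4*m^3)
      linarith
    -- Chebyshev
    have hcheb := meas_ge_le_variance_div_sq (μ := μ) hZmem hD0
    rw [hEZval] at hcheb
    refine le_trans (le_trans (measure_mono ?_) hcheb) ?_
    · intro ω hω
      simp only [Set.mem_setOf_eq] at hω ⊢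
      have hZω : (∑ i, T i) ω = ∑ i, (((X i ω : ℝ) - m/(n:ℝ))^2 - (X i ω : ℝ)) := by
        simp [Finset.sum_apply, hT_def, hg_def]
      rw [hZω]
      rw [abs_sub_comm]
      refine le_trans ?_ (le_abs_self _)
      rw [hv_sq]
      linarith
    · have hbound : variance (∑ i, T i) μ / (m^2*v^2 - 4*m/Real.sqrt n)^2 ≤ 1/3 := by
        refine le_trans ?_ hfin
        gcongr
      calc ENNReal.ofReal (variance (∑ i, T i) μ / (m^2*v^2 - 4*m/Real.sqrt n)^2)
          ≤ ENNReal.ofReal (1/3) := ENNReal.ofReal_le_ofReal hbound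
        _ = 1/3 := by
            rw [ENNReal.ofReal_div_of_pos (by norm_num)]
            norm_num
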